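/- Assume in addition that h is twice differentiable at 0 with h''(0) < 0. Then for every t ∈ ℝ and every T-invariant probability measure μ on (Θ, 𝓑) one has μ(S_t \ N_t) = 0. -/

import Mathlib

open MeasureTheory Filter Topology

/-- The general setting of the paper: a measurable base system with invertible
driving map `T`, a concave fibre function `h` (with its derivative `h'` on `[0,∞)`)
and a bounded measurable positive function `g`. -/
structure Setting (Θ : Type*) [MeasurableSpace Θ] where
  T : Θ → Θ
  Tinv : Θ → Θ
  left_inv : Function.LeftInverse Tinv T
  right_inv : Function.RightInverse Tinv T
  T_meas : Measurable T
  Tinv_meas : Measurable Tinv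
  h : ℝ → ℝ
  h' : ℝ → ℝ
  h_hasDeriv : ∀ x ∈ Set.Ici (0 : ℝ), HasDerivWithinAt h (h' x) (Set.Ici 0) x
  h'_cont : ContinuousOn h' (Set.Ici 0)
  h_strictConcave : StrictConcaveOn ℝ (Set.Ici 0) h
  h_zero : h 0 = 0
  h'_pos : ∀ x : ℝ, 0 < x → 0 < h' x
  h'_zero : h' 0 = 1
  h_sublinear : Tendsto (fun x => h x / x) atTop (𝓝 0)
  g : Θ → ℝ
  g_pos : ∀ θ, 0 < g θ
  g_bdd : ∃ C : ℝ, ∀ θ, g θ ≤ C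
  g_meas : Measurable g

namespace Setting

variable {Θ : Type*} [MeasurableSpace Θ]

/-- The fibre maps `f_t(θ,x) = e^{-t} g(θ) h(x)`. -/
noncomputable def f (S : Setting Θ) (t : ℝ) (θ : Θ) (x : ℝ) : ℝ :=
  Real.exp (-t) * S.g θ * S.h x

/-- The iterated fibre maps: `fn t 0 θ x = x` and
`fn t (n+1) θ x = f t (T^[n] θ) (fn t n θ x)`, so that `fn t 1 = f t`. -/
noncomputable def fn (S : Setting Θ) (t : ℝ) : ℕ → Θ → ℝ → ℝ
  | 0, _, x => x
  | n + 1, θ, x => S.f t (S.T^[n] θ) (S.fn t n θ x)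

/-- `ψ_{t,n}(θ) = f_t^n(T^{-n}θ, M)`. -/
noncomputable def ψ (S : Setting Θ) (t M : ℝ) (n : ℕ) (θ : Θ) : ℝ :=
  S.fn t n (S.Tinv^[n] θ) M

/-- The maximal invariant function `φ_t(θ) = inf_{n ≥ 1} ψ_{t,n}(θ)`. -/
noncomputable def φ (S : Setting Θ) (t M : ℝ) (θ : Θ) : ℝ :=
  ⨅ n : ℕ, S.ψ t M (n + 1) θ

/-- The zero set `N_t = {θ : φ_t(θ) = 0}`. -/
noncomputable def Nset (S : Setting Θ) (t M : ℝ) : Set Θ := {θ | S.φ t M θ = 0}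

/-- The critical parameter `t_c(θ) = inf {t : φ_t(θ) = 0}`. -/
noncomputable def tc (S : Setting Θ) (M : ℝ → ℝ) (θ : Θ) : ℝ :=
  sInf {t : ℝ | S.φ t (M t) θ = 0}

/-- The bifurcation set `S_t = {θ : t_c(θ) = t}`. -/
noncomputable def Sset (S : Setting Θ) (M : ℝ → ℝ) (t : ℝ) : Set Θ :=
  {θ | S.tc M θ = t}

/-- The Birkhoff average `Γ^{(n)}(θ) = (1/n) ∑_{k=1}^n log g(T^{-k}θ)`. -/
noncomputable def Γn (S : Setting Θ) (n : ℕ) (θ : Θ) : ℝ :=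
  (∑ k ∈ Finset.range n, Real.log (S.g (S.Tinv^[k + 1] θ))) / n

/-- The lower backwards Lyapunov average `Γ(θ) = liminf_n Γ^{(n)}(θ)`. -/
noncomputable def Γ (S : Setting Θ) (θ : Θ) : ℝ :=
  Filter.liminf (fun n : ℕ => S.Γn n θ) Filter.atTop

/-- The averaged exponent `γ(μ) = ∫ log g dμ`. -/
noncomputable def γfn (S : Setting Θ) (μ : Measure Θ) : ℝ :=
  ∫ θ, Real.log (S.g θ) ∂μ

/-- The function `H(x) = log (h(x)/x)`. -/
noncomputable def Hfn (S : Setting Θ) (x : ℝ) : ℝ := Real.log (S.h x / x)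

section Aux

variable (S : Setting Θ)

lemma h_contOn : ContinuousOn S.h (Set.Ici 0) := fun x hx =>
  (S.h_hasDeriv x hx).continuousWithinAt

/-- Continuous extension of `h`. -/
noncomputable def hext : ℝ → ℝ := fun x => S.h (max x 0)

lemma hext_cont : Continuous S.hext := by
  have hm : Continuous fun x : ℝ => max x 0 := continuous_id.max continuous_const
  exact S.h_contOn.comp_continuous hm fun x => le_max_right x 0

lemma hext_eq {x : ℝ} (hx0 : 0 ≤ x) : S.hext x = S.h x := by
  unfold hext; rw [max_eq_left hx0]

lemma h_strictMono : StrictMonoOn S.h (Set.Ici 0) := by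
  apply strictMonoOn_of_deriv_pos (convex_Ici 0) S.h_contOn
  intro x hx
  rw [interior_Ici] at hx
  have hD : HasDerivAt S.h (S.h' x) x :=
    (S.h_hasDeriv x (Set.mem_Ici.2 (le_of_lt (Set.mem_Ioi.1 hx)))).hasDerivAt (Ici_mem_nhds hx)
  rw [hD.deriv]
  exact S.h'_pos x hx

lemma h_pos {x : ℝ} (hx : 0 < x) : 0 < S.h x := by
  have := S.h_strictMono Set.self_mem_Ici (Set.mem_Ici.2 hx.le) hx
  rwa [S.h_zero] at this

lemma h_nonneg {x : ℝ} (hx : 0 ≤ x) : 0 ≤ S.h x := by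
  rcases eq_or_lt_of_le hx with h | h
  · rw [← h, S.h_zero]
  · exact (S.h_pos h).le

lemma h_mono {x y : ℝ} (hx : 0 ≤ x) (hxy : x ≤ y) : S.h x ≤ S.h y :=
  S.h_strictMono.monotoneOn (Set.mem_Ici.2 hx) (Set.mem_Ici.2 (hx.trans hxy)) hxy

lemma ratio_lt {x y : ℝ} (hx : 0 < x) (hxy : x < y) : S.h y / y < S.h x / x := by
  have hy : 0 < y := hx.trans hxy
  have ha : 0 < x / y := div_pos hx hy
  have hb : 0 < 1 - x / y := by
    have : x / y < 1 := (div_lt_one hy).2 hxy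
    linarith
  have hcon := S.h_strictConcave.2 (Set.mem_Ici.2 hy.le) Set.self_mem_Ici
    (ne_of_gt hy) ha hb (by ring)
  rw [smul_eq_mul, smul_eq_mul, smul_eq_mul, smul_eq_mul, S.h_zero] at hcon
  have hxy' : x / y * y + (1 - x / y) * 0 = x := by field_simp; ring
  rw [hxy'] at hcon
  have hkey : x / y * S.h y < S.h x := by linarith
  rw [div_lt_div_iff₀ hy hx]
  have h2 : x / y * S.h y * y = S.h y * x := by field_simp
  nlinarith

lemma slope_tendsto : Tendsto (fun x => S.h x / x) (𝓝[>] (0:ℝ)) (𝓝 1) := by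
  have h0 := S.h_hasDeriv 0 Set.self_mem_Ici
  rw [hasDerivWithinAt_iff_tendsto_slope, Set.Ici_sdiff_left, S.h'_zero] at h0
  refine h0.congr' ?_
  filter_upwards [self_mem_nhdsWithin] with x hx
  simp [slope_def_field, S.h_zero]

lemma ratio_lt_one {x : ℝ} (hx : 0 < x) : S.h x / x < 1 := by
  have hhalf : S.h (x / 2) / (x / 2) ≤ 1 := by
    refine ge_of_tendsto S.slope_tendsto ?_
    have h1 : Set.Iio (x / 2) ∈ 𝓝[>] (0:ℝ) :=
      nhdsWithin_le_nhds (Iio_mem_nhds (by linarith))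
    filter_upwards [h1, self_mem_nhdsWithin] with y hy hy0
    exact (S.ratio_lt hy0 hy).le
  have := S.ratio_lt (by linarith : (0:ℝ) < x / 2) (by linarith : x / 2 < x)
  linarith

lemma h_lt_self {x : ℝ} (hx : 0 < x) : S.h x < x :=
  (div_lt_one hx).1 (S.ratio_lt_one hx)

lemma h_le_self {x : ℝ} (hx : 0 ≤ x) : S.h x ≤ x := by
  rcases eq_or_lt_of_le hx with h | h
  · rw [← h, S.h_zero]
  · exact (S.h_lt_self h).le

lemma inv_ratio_le {x M : ℝ} (hx : 0 < x) (hxM : x ≤ M) : x / S.h x ≤ M / S.h M := by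
  have hM : 0 < M := hx.trans_le hxM
  have h1 : S.h M / M ≤ S.h x / x := by
    rcases eq_or_lt_of_le hxM with h | h
    · rw [h]
    · exact (S.ratio_lt hx h).le
  have hhx := S.h_pos hx
  have hhM := S.h_pos hM
  rw [div_le_div_iff₀ hhx hhM]
  rw [div_le_div_iff₀ hM hx] at h1
  nlinarith

lemma one_le_inv_ratio {x : ℝ} (hx : 0 < x) : 1 < x / S.h x := by
  have := S.h_lt_self hx
  have := S.h_pos hx
  rw [lt_div_iff₀ this]
  linarith

lemma h_scale {c x : ℝ} (hc : 1 ≤ c) (hx0 : 0 ≤ x) : S.h (c * x) ≤ c * S.h x := by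
  rcases eq_or_lt_of_le hc with rfl | hc1
  · simp
  rcases eq_or_lt_of_le hx0 with rfl | hx
  · simp [S.h_zero]
  have hc0 : 0 < c := by linarith
  have hcon := S.h_strictConcave.concaveOn.2 (Set.mem_Ici.2 (by positivity : (0:ℝ) ≤ c * x))
    Set.self_mem_Ici (by positivity : (0:ℝ) ≤ 1 / c)
    (by rw [sub_nonneg, div_le_one hc0]; linarith : (0:ℝ) ≤ 1 - 1 / c)
    (by ring)
  rw [smul_eq_mul, smul_eq_mul, smul_eq_mul, smul_eq_mul, S.h_zero] at hcon
  have h1 : 1 / c * (c * x) + (1 - 1 / c) * 0 = x := by field_simp; ring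
  rw [h1] at hcon
  have h2 : 1 / c * S.h (c * x) ≤ S.h x := by linarith
  calc S.h (c * x) = c * (1 / c * S.h (c * x)) := by field_simp
    _ ≤ c * S.h x := by nlinarith

lemma f_pos {t : ℝ} {θ : Θ} {x : ℝ} (hx : 0 < x) : 0 < S.f t θ x := by
  unfold f
  have h1 := S.g_pos θ
  have h2 := S.h_pos hx
  positivity

lemma f_nonneg {t : ℝ} {θ : Θ} {x : ℝ} (hx : 0 ≤ x) : 0 ≤ S.f t θ x := by
  unfold f
  have h1 := S.g_pos θ
  have h2 := S.h_nonneg hx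
  positivity

lemma f_mono {t : ℝ} {θ : Θ} {x y : ℝ} (hx : 0 ≤ x) (hxy : x ≤ y) :
    S.f t θ x ≤ S.f t θ y := by
  unfold f
  have h1 := S.h_mono hx hxy
  have h2 := (S.g_pos θ).le
  have h3 := (Real.exp_pos (-t)).le
  exact mul_le_mul_of_nonneg_left h1 (by positivity)

lemma f_anti_t {s t : ℝ} {θ : Θ} {x : ℝ} (hst : s ≤ t) (hx : 0 ≤ x) :
    S.f t θ x ≤ S.f s θ x := by
  unfold f
  have h1 := S.h_nonneg hx
  have h2 := (S.g_pos θ).le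
  have h3 : Real.exp (-t) ≤ Real.exp (-s) := Real.exp_le_exp.2 (by linarith)
  have h4 : 0 ≤ S.g θ * S.h x := by positivity
  nlinarith

lemma fn_zero (t : ℝ) (θ : Θ) (x : ℝ) : S.fn t 0 θ x = x := rfl

lemma fn_succ (t : ℝ) (n : ℕ) (θ : Θ) (x : ℝ) :
    S.fn t (n + 1) θ x = S.f t (S.T^[n] θ) (S.fn t n θ x) := rfl

lemma fn_pos {t : ℝ} {θ : Θ} {x : ℝ} (hx : 0 < x) (n : ℕ) : 0 < S.fn t n θ x := by
  induction n with
  | zero => exact hx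
  | succ n ih => rw [fn_succ]; exact S.f_pos ih

lemma fn_nonneg {t : ℝ} {θ : Θ} {x : ℝ} (hx : 0 ≤ x) (n : ℕ) : 0 ≤ S.fn t n θ x := by
  induction n with
  | zero => exact hx
  | succ n ih => rw [fn_succ]; exact S.f_nonneg ih

lemma fn_mono {t : ℝ} {θ : Θ} {x y : ℝ} (hx : 0 ≤ x) (hxy : x ≤ y) (n : ℕ) :
    S.fn t n θ x ≤ S.fn t n θ y := by
  induction n with
  | zero => exact hxy
  | succ n ih => rw [fn_succ, fn_succ]; exact S.f_mono (S.fn_nonneg hx n) ih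

lemma fn_anti_t {s t : ℝ} {θ : Θ} {x : ℝ} (hst : s ≤ t) (hx : 0 ≤ x) (n : ℕ) :
    S.fn t n θ x ≤ S.fn s n θ x := by
  induction n with
  | zero => exact le_refl x
  | succ n ih =>
    rw [fn_succ, fn_succ]
    calc S.f t (S.T^[n] θ) (S.fn t n θ x) ≤ S.f t (S.T^[n] θ) (S.fn s n θ x) :=
          S.f_mono (S.fn_nonneg hx n) ih
      _ ≤ S.f s (S.T^[n] θ) (S.fn s n θ x) := S.f_anti_t hst (S.fn_nonneg hx n)

lemma fn_scale {t : ℝ} {θ : Θ} {c x y : ℝ} (hc : 1 ≤ c) (hx : 0 ≤ x) (hy : 0 ≤ y)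
    (hyx : y ≤ c * x) (n : ℕ) : S.fn t n θ y ≤ c * S.fn t n θ x := by
  induction n with
  | zero => exact hyx
  | succ n ih =>
    rw [fn_succ, fn_succ]
    have h0 : 0 ≤ S.fn t n θ x := S.fn_nonneg hx n
    have h1 : S.f t (S.T^[n] θ) (S.fn t n θ y) ≤ S.f t (S.T^[n] θ) (c * S.fn t n θ x) :=
      S.f_mono (S.fn_nonneg hy n) ih
    refine h1.trans ?_
    unfold f
    have h2 := S.h_scale hc h0
    have h3 := (S.g_pos (S.T^[n] θ)).le
    have h4 := (Real.exp_pos (-t)).le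
    calc Real.exp (-t) * S.g (S.T^[n] θ) * S.h (c * S.fn t n θ x)
        ≤ Real.exp (-t) * S.g (S.T^[n] θ) * (c * S.h (S.fn t n θ x)) :=
          mul_le_mul_of_nonneg_left h2 (by positivity)
      _ = c * (Real.exp (-t) * S.g (S.T^[n] θ) * S.h (S.fn t n θ x)) := by ring

lemma fn_le_geom {t : ℝ} {θ : Θ} {x C : ℝ} (hx : 0 ≤ x) (hC : ∀ η, S.g η ≤ C) (n : ℕ) :
    S.fn t n θ x ≤ x * (Real.exp (-t) * C) ^ n := by
  have hC0 : 0 ≤ C := le_of_lt ((S.g_pos θ).trans_le (hC θ))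
  induction n with
  | zero => simp [fn_zero]
  | succ n ih =>
    rw [fn_succ, pow_succ]
    have h0 : 0 ≤ S.fn t n θ x := S.fn_nonneg hx n
    have h1 : S.h (S.fn t n θ x) ≤ S.fn t n θ x := S.h_le_self h0
    have h2 : 0 ≤ S.h (S.fn t n θ x) := S.h_nonneg h0
    have h3 := S.g_pos (S.T^[n] θ)
    have h4 := hC (S.T^[n] θ)
    have h5 := Real.exp_pos (-t)
    unfold f
    calc Real.exp (-t) * S.g (S.T^[n] θ) * S.h (S.fn t n θ x)
        ≤ Real.exp (-t) * C * S.h (S.fn t n θ x) :=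
          mul_le_mul_of_nonneg_right (mul_le_mul_of_nonneg_left h4 h5.le) h2
      _ ≤ Real.exp (-t) * C * S.fn t n θ x :=
          mul_le_mul_of_nonneg_left h1 (by positivity)
      _ ≤ Real.exp (-t) * C * (x * (Real.exp (-t) * C) ^ n) :=
          mul_le_mul_of_nonneg_left ih (by positivity)
      _ = x * ((Real.exp (-t) * C) ^ n * (Real.exp (-t) * C)) := by ring

lemma fn_comp (t : ℝ) (n : ℕ) (θ : Θ) (x : ℝ) :
    S.fn t (n + 1) θ x = S.fn t n (S.T θ) (S.f t θ x) := by
  induction n with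
  | zero => rfl
  | succ n ih =>
    rw [fn_succ, ih, fn_succ, Function.iterate_succ_apply]

lemma T_Tinv_iter (n : ℕ) (θ : Θ) : S.T^[n] (S.Tinv^[n] θ) = θ := by
  induction n with
  | zero => rfl
  | succ n ih =>
    rw [Function.iterate_succ_apply, Function.iterate_succ_apply']
    rw [S.right_inv (S.Tinv^[n] θ)]
    exact ih

lemma Titer_Tinviter {j n : ℕ} (hj : j ≤ n) (θ : Θ) :
    S.T^[j] (S.Tinv^[n] θ) = S.Tinv^[n - j] θ := by
  have : S.Tinv^[n] θ = S.Tinv^[j] (S.Tinv^[n - j] θ) := by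
    rw [← Function.iterate_add_apply, Nat.add_sub_cancel' hj]
  rw [this, S.T_Tinv_iter j]

end Aux

section Psi

variable (S : Setting Θ) {t M : ℝ}

lemma psi_pos (hM : 0 < M) (n : ℕ) (θ : Θ) : 0 < S.ψ t M n θ := S.fn_pos hM n

lemma psi_succ_T (n : ℕ) (θ : Θ) : S.ψ t M (n + 1) (S.T θ) = S.f t θ (S.ψ t M n θ) := by
  show S.fn t (n + 1) (S.Tinv^[n + 1] (S.T θ)) M = _
  have e1 : S.Tinv^[n + 1] (S.T θ) = S.Tinv^[n] θ := by
    rw [Function.iterate_succ_apply, S.left_inv θ]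
  rw [e1, fn_succ, S.T_Tinv_iter n θ]
  rfl

lemma psi_anti (hM : 0 < M) (hfM : ∀ θ, S.f t θ M < M) (n : ℕ) (θ : Θ) :
    S.ψ t M (n + 1) θ ≤ S.ψ t M n θ := by
  show S.fn t (n + 1) (S.Tinv^[n + 1] θ) M ≤ S.fn t n (S.Tinv^[n] θ) M
  rw [fn_comp]
  have e1 : S.T (S.Tinv^[n + 1] θ) = S.Tinv^[n] θ := by
    rw [Function.iterate_succ_apply', S.right_inv]
  rw [e1]
  exact S.fn_mono (S.f_nonneg hM.le) (hfM _).le n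

lemma psi_one_lt (hfM : ∀ θ, S.f t θ M < M) (θ : Θ) : S.ψ t M 1 θ < M := by
  have e : S.ψ t M 1 θ = S.f t (S.Tinv θ) M := by
    show S.fn t 1 (S.Tinv^[1] θ) M = _
    rw [Function.iterate_one]
    rfl
  rw [e]
  exact hfM _

lemma psi_meas (hM : 0 < M) : ∀ n, Measurable (fun θ => S.ψ t M n θ)
  | 0 => measurable_const
  | (n + 1) => by
    have e : (fun θ => S.ψ t M (n + 1) θ)
        = fun θ => Real.exp (-t) * S.g (S.Tinv θ) * S.hext (S.ψ t M n (S.Tinv θ)) := by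
      funext θ
      have h1 := S.psi_succ_T (t := t) (M := M) n (S.Tinv θ)
      rw [S.right_inv θ] at h1
      rw [h1]
      show S.f t (S.Tinv θ) (S.ψ t M n (S.Tinv θ)) = _
      unfold f
      rw [S.hext_eq (S.psi_pos hM n (S.Tinv θ)).le]
    rw [e]
    exact (measurable_const.mul (S.g_meas.comp S.Tinv_meas)).mul
      (S.hext_cont.measurable.comp ((psi_meas hM n).comp S.Tinv_meas))

lemma phi_nonneg (hM : 0 < M) (θ : Θ) : 0 ≤ S.φ t M θ :=
  le_ciInf fun n => (S.psi_pos hM (n + 1) θ).le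

lemma phi_le_psi (hM : 0 < M) (θ : Θ) (n : ℕ) : S.φ t M θ ≤ S.ψ t M (n + 1) θ :=
  ciInf_le ⟨0, by rintro y ⟨k, rfl⟩; exact (S.psi_pos hM (k + 1) θ).le⟩ n

lemma phi_lt_M (hM : 0 < M) (hfM : ∀ θ, S.f t θ M < M) (θ : Θ) : S.φ t M θ < M :=
  (S.phi_le_psi hM θ 0).trans_lt (S.psi_one_lt hfM θ)

lemma psi_tendsto (hM : 0 < M) (hfM : ∀ θ, S.f t θ M < M) (θ : Θ) :
    Tendsto (fun n => S.ψ t M n θ) atTop (𝓝 (S.φ t M θ)) := by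
  have hbdd : BddBelow (Set.range fun n : ℕ => S.ψ t M n θ) := by
    refine ⟨0, ?_⟩
    rintro y ⟨k, rfl⟩
    exact (S.psi_pos hM k θ).le
  have hbdd' : BddBelow (Set.range fun n : ℕ => S.ψ t M (n + 1) θ) := by
    refine ⟨0, ?_⟩
    rintro y ⟨k, rfl⟩
    exact (S.psi_pos hM (k + 1) θ).le
  have hanti : Antitone fun n => S.ψ t M n θ :=
    antitone_nat_of_succ_le fun n => S.psi_anti hM hfM n θ
  have h1 := tendsto_atTop_ciInf hanti hbdd
  have e : (⨅ n : ℕ, S.ψ t M n θ) = S.φ t M θ := by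
    refine le_antisymm (le_ciInf fun n => ciInf_le hbdd (n + 1)) ?_
    refine le_ciInf fun n => ?_
    calc S.φ t M θ ≤ S.ψ t M (n + 1) θ := ciInf_le hbdd' n
      _ ≤ S.ψ t M n θ := S.psi_anti hM hfM n θ
  rwa [e] at h1

lemma phi_T (hM : 0 < M) (hfM : ∀ θ, S.f t θ M < M) (θ : Θ) :
    S.φ t M (S.T θ) = S.f t θ (S.φ t M θ) := by
  have h1 : Tendsto (fun n => S.ψ t M (n + 1) (S.T θ)) atTop (𝓝 (S.φ t M (S.T θ))) :=
    (S.psi_tendsto hM hfM (S.T θ)).comp (tendsto_add_atTop_nat 1)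
  have h1' : Tendsto (fun n => S.f t θ (S.ψ t M n θ)) atTop (𝓝 (S.φ t M (S.T θ))) :=
    h1.congr fun n => S.psi_succ_T n θ
  have hc : Continuous fun x : ℝ => Real.exp (-t) * S.g θ * S.hext x :=
    (continuous_const.mul continuous_const).mul S.hext_cont
  have h2 := (hc.tendsto (S.φ t M θ)).comp (S.psi_tendsto hM hfM θ)
  have h3 : ∀ n : ℕ, Real.exp (-t) * S.g θ * S.hext (S.ψ t M n θ) = S.f t θ (S.ψ t M n θ) := by
    intro n
    unfold f
    rw [S.hext_eq (S.psi_pos hM n θ).le]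
  have h4 : Real.exp (-t) * S.g θ * S.hext (S.φ t M θ) = S.f t θ (S.φ t M θ) := by
    unfold f
    rw [S.hext_eq (S.phi_nonneg hM θ)]
  rw [h4] at h2
  exact tendsto_nhds_unique h1' (h2.congr h3)

lemma phi_zero_iff (hM : 0 < M) (hfM : ∀ θ, S.f t θ M < M) (θ : Θ) :
    S.φ t M (S.T θ) = 0 ↔ S.φ t M θ = 0 := by
  rw [S.phi_T hM hfM θ]
  constructor
  · intro h0
    by_contra hne
    have hpos : 0 < S.φ t M θ := lt_of_le_of_ne (S.phi_nonneg hM θ) (Ne.symm hne)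
    exact absurd h0 (ne_of_gt (S.f_pos hpos))
  · intro h0
    rw [h0]
    show Real.exp (-t) * S.g θ * S.h 0 = 0
    rw [S.h_zero]
    ring

lemma phi_meas (hM : 0 < M) : Measurable (fun θ => S.φ t M θ) :=
  Measurable.iInf fun n => S.psi_meas hM (n + 1)

lemma phi_zero_mono {u u' Mu Mu' : ℝ} (hu : u ≤ u') (hMu : 0 < Mu) (hMu' : 0 < Mu')
    (θ : Θ) (h0 : S.φ u Mu θ = 0) : S.φ u' Mu' θ = 0 := by
  set r := max (Mu' / Mu) 1 with hr
  have hr1 : 1 ≤ r := le_max_right _ _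
  have hr0 : 0 < r := lt_of_lt_of_le one_pos hr1
  have hle : ∀ n θ', S.ψ u' Mu' n θ' ≤ r * S.ψ u Mu n θ' := by
    intro n θ'
    have h1 : S.ψ u' Mu' n θ' ≤ r * S.ψ u' Mu n θ' := by
      apply S.fn_scale hr1 hMu.le hMu'.le
      calc Mu' = Mu' / Mu * Mu := by field_simp
        _ ≤ r * Mu := mul_le_mul_of_nonneg_right (le_max_left _ _) hMu.le
    have h2 : S.ψ u' Mu n θ' ≤ S.ψ u Mu n θ' := S.fn_anti_t hu hMu.le n
    exact h1.trans (mul_le_mul_of_nonneg_left h2 hr0.le)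
  have hnn := S.phi_nonneg (t := u') hMu' θ
  by_contra hne
  have hpos : 0 < S.φ u' Mu' θ := lt_of_le_of_ne hnn (Ne.symm hne)
  have hlt : (⨅ n : ℕ, S.ψ u Mu (n + 1) θ) < S.φ u' Mu' θ / r := by
    rw [show (⨅ n : ℕ, S.ψ u Mu (n + 1) θ) = S.φ u Mu θ from rfl, h0]
    positivity
  obtain ⟨n, hn⟩ := exists_lt_of_ciInf_lt hlt
  have h5 : S.φ u' Mu' θ ≤ r * S.ψ u Mu (n + 1) θ :=
    (S.phi_le_psi (t := u') hMu' θ n).trans (hle (n + 1) θ)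
  have h6 : r * S.ψ u Mu (n + 1) θ < r * (S.φ u' Mu' θ / r) :=
    mul_lt_mul_of_pos_left hn hr0
  have h7 : r * (S.φ u' Mu' θ / r) = S.φ u' Mu' θ := by field_simp
  linarith

lemma phi_zero_of_small {u Mu C : ℝ} (hMu : 0 < Mu) (hC : ∀ η, S.g η ≤ C)
    (hsmall : Real.exp (-u) * C ≤ 1 / 2) (θ : Θ) : S.φ u Mu θ = 0 := by
  have hC0 : 0 < C := (S.g_pos θ).trans_le (hC θ)
  have hnn := S.phi_nonneg (t := u) hMu θ
  by_contra hne
  have hpos : 0 < S.φ u Mu θ := lt_of_le_of_ne hnn (Ne.symm hne)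
  obtain ⟨n, hn⟩ := exists_pow_lt_of_lt_one (show (0:ℝ) < S.φ u Mu θ / Mu by positivity)
    (show (1:ℝ)/2 < 1 by norm_num)
  have h1 := S.phi_le_psi (t := u) hMu θ n
  have h2 : S.ψ u Mu (n + 1) θ ≤ Mu * (Real.exp (-u) * C) ^ (n + 1) :=
    S.fn_le_geom hMu.le hC (n + 1)
  have h3 : (Real.exp (-u) * C) ^ (n + 1) ≤ (1/2 : ℝ) ^ (n + 1) :=
    pow_le_pow_left₀ (by positivity) hsmall (n + 1)
  have h4 : ((1:ℝ)/2) ^ (n + 1) ≤ (1/2 : ℝ) ^ n := by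
    rw [pow_succ]
    nlinarith [pow_nonneg (show (0:ℝ) ≤ 1/2 by norm_num) n]
  have h5 : Mu * ((1:ℝ)/2) ^ n < Mu * (S.φ u Mu θ / Mu) := mul_lt_mul_of_pos_left hn hMu
  have h6 : Mu * (S.φ u Mu θ / Mu) = S.φ u Mu θ := by field_simp
  nlinarith [pow_nonneg (show (0:ℝ) ≤ 1/2 by norm_num) (n+1),
    mul_le_mul_of_nonneg_left h3 hMu.le, mul_le_mul_of_nonneg_left h4 hMu.le]

end Psi

/-- The zero-parameter set. -/
def Zset (S : Setting Θ) (M : ℝ → ℝ) (θ : Θ) : Set ℝ := {u : ℝ | S.φ u (M u) θ = 0}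

section Tc

variable (S : Setting Θ) {M : ℝ → ℝ}

lemma tc_eq_sInf_Z (θ : Θ) : S.tc M θ = sInf (S.Zset M θ) := rfl

lemma Z_upclosed (hM : ∀ u, 0 < M u) {θ : Θ} {u u' : ℝ} (hu : u ≤ u')
    (h : u ∈ S.Zset M θ) : u' ∈ S.Zset M θ :=
  S.phi_zero_mono hu (hM u) (hM u') θ h

lemma Z_nonempty (hM : ∀ u, 0 < M u) {C : ℝ} (hC : ∀ η, S.g η ≤ C) (θ : Θ) :
    (S.Zset M θ).Nonempty := by
  have hC0 : 0 < C := (S.g_pos θ).trans_le (hC θ)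
  refine ⟨Real.log (2 * C), ?_⟩
  apply S.phi_zero_of_small (hM _) hC
  rw [Real.exp_neg, Real.exp_log (by positivity)]
  have h2 : (2 * C)⁻¹ * C = 1 / 2 := by field_simp
  linarith

lemma Z_T (hM : ∀ u, 0 < M u) (hMf : ∀ u θ, S.f u θ (M u) < M u) (θ : Θ) :
    S.Zset M (S.T θ) = S.Zset M θ := by
  ext u
  exact S.phi_zero_iff (hM u) (hMf u) θ

lemma tc_T (hM : ∀ u, 0 < M u) (hMf : ∀ u θ, S.f u θ (M u) < M u) (θ : Θ) :
    S.tc M (S.T θ) = S.tc M θ := by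
  rw [tc_eq_sInf_Z, tc_eq_sInf_Z, S.Z_T hM hMf θ]

lemma le_tc (hM : ∀ u, 0 < M u) {C : ℝ} (hC : ∀ η, S.g η ≤ C) {θ : Θ} {s : ℝ}
    (hs : S.φ s (M s) θ ≠ 0) : s ≤ S.tc M θ := by
  refine le_csInf (S.Z_nonempty hM hC θ) fun z hz => ?_
  by_contra hlt
  push_neg at hlt
  exact hs (S.Z_upclosed hM hlt.le hz)

lemma tc_meas (hM : ∀ u, 0 < M u) {C : ℝ} (hC : ∀ η, S.g η ≤ C) :
    Measurable (S.tc M) := by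
  classical
  set D : Set Θ :=
    ⋂ n : ℕ, ⋃ q : {q : ℚ // (q : ℝ) < -(n : ℝ)}, {θ | S.φ (q : ℝ) (M (q : ℝ)) θ = 0} with hD
  have hZq : ∀ q : ℚ, MeasurableSet {θ | S.φ (q : ℝ) (M (q : ℝ)) θ = 0} := fun q =>
    measurableSet_eq_fun (S.phi_meas (hM _)) measurable_const
  have hDmeas : MeasurableSet D :=
    MeasurableSet.iInter fun n => MeasurableSet.iUnion fun q => hZq q
  have hDchar : ∀ θ, θ ∈ D ↔ ¬BddBelow (S.Zset M θ) := by
    intro θ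
    constructor
    · intro hθ
      rintro ⟨b, hb⟩
      obtain ⟨n, hn⟩ := exists_nat_gt (-b)
      have h1 := Set.mem_iInter.1 hθ n
      obtain ⟨⟨q, hq⟩, hq2⟩ := Set.mem_iUnion.1 h1
      have hqZ : (q : ℝ) ∈ S.Zset M θ := hq2
      have := hb hqZ
      have : -(n : ℝ) < b := by linarith
      linarith
    · intro hbd
      rw [not_bddBelow_iff] at hbd
      refine Set.mem_iInter.2 fun n => ?_
      obtain ⟨z, hz, hzn⟩ := hbd (-(n : ℝ))
      obtain ⟨q, hq1, hq2⟩ := exists_rat_btwn hzn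
      refine Set.mem_iUnion.2 ⟨⟨q, hq2⟩, ?_⟩
      exact S.Z_upclosed hM hq1.le hz
  apply measurable_of_Iio
  intro a
  have hset : S.tc M ⁻¹' Set.Iio a =
      ((if 0 < a then D else ∅) ∪ (Dᶜ ∩ ⋃ q : {q : ℚ // (q : ℝ) < a},
        {θ | S.φ (q : ℝ) (M (q : ℝ)) θ = 0})) := by
    ext θ
    simp only [Set.mem_preimage, Set.mem_Iio, Set.mem_union, Set.mem_inter_iff,
      Set.mem_compl_iff]
    by_cases hθD : θ ∈ D
    · have htc : S.tc M θ = 0 := by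
        rw [tc_eq_sInf_Z]
        exact Real.sInf_of_not_bddBelow ((hDchar θ).1 hθD)
      rw [htc]
      by_cases h0a : 0 < a
      · simp [hθD, h0a]
      · simp [hθD, h0a]
    · have hbd : BddBelow (S.Zset M θ) := by
        by_contra hb
        exact hθD ((hDchar θ).2 hb)
      constructor
      · intro hlt
        rw [tc_eq_sInf_Z] at hlt
        obtain ⟨z, hz, hza⟩ := exists_lt_of_csInf_lt (S.Z_nonempty hM hC θ) hlt
        obtain ⟨q, hq1, hq2⟩ := exists_rat_btwn hza
        refine Or.inr ⟨hθD, Set.mem_iUnion.2 ⟨⟨q, hq2⟩, S.Z_upclosed hM hq1.le hz⟩⟩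
      · rintro (hl | ⟨_, hr⟩)
        · by_cases h0a : 0 < a <;> simp [h0a, hθD] at hl
        · obtain ⟨⟨q, hqa⟩, hq⟩ := Set.mem_iUnion.1 hr
          have hqZ : (q : ℝ) ∈ S.Zset M θ := hq
          rw [tc_eq_sInf_Z]
          exact lt_of_le_of_lt (csInf_le hbd hqZ) hqa
  rw [hset]
  refine MeasurableSet.union ?_ (hDmeas.compl.inter (MeasurableSet.iUnion fun q => hZq q))
  by_cases h0a : 0 < a
  · simpa [h0a] using hDmeas
  · simp [h0a]

end Tc

section Star

variable (S : Setting Θ)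

lemma phi_pos_of_star {s M' ε c δ : ℝ} (hM' : 0 < M') (hfM : ∀ θ, S.f s θ M' < M')
    (θ : Θ) (hε : 0 < ε) (hc : 0 ≤ c) (hδ : 0 < δ) (hδM : δ ≤ M')
    (hδh : ∀ x : ℝ, 0 < x → x ≤ δ → Real.exp (-(ε / 2)) * x ≤ S.h x)
    (hstar : ∀ m : ℕ, 1 ≤ m →
      ε * m - c ≤ ∑ k ∈ Finset.range m, (-s + Real.log (S.g (S.Tinv^[k + 1] θ)))) :
    0 < S.φ s M' θ := by
  have hkey : ∀ n : ℕ, δ * Real.exp (-c) ≤ S.ψ s M' (n + 1) θ := by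
    intro n
    set P : ℕ → ℝ := fun m => ∑ k ∈ Finset.range m,
      (-s + Real.log (S.g (S.Tinv^[k + 1] θ)) - ε / 2) with hPdef
    have hP0 : P 0 = 0 := by simp [hPdef]
    have hPsucc : ∀ m : ℕ,
        P (m + 1) = P m + (-s + Real.log (S.g (S.Tinv^[m + 1] θ)) - ε / 2) := by
      intro m
      simp only [hPdef, Finset.sum_range_succ]
    have hP : ∀ m, -c ≤ P m := by
      intro m
      rcases Nat.eq_zero_or_pos m with rfl | hm
      · rw [hP0]; linarith
      · have h1 := hstar m hm
        have h2 : P m = (∑ k ∈ Finset.range m, (-s + Real.log (S.g (S.Tinv^[k + 1] θ))))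
            - (ε / 2) * m := by
          simp only [hPdef]
          rw [Finset.sum_sub_distrib, Finset.sum_const, Finset.card_range, nsmul_eq_mul]
          push_cast
          ring
        have hm1 : (1 : ℝ) ≤ m := by exact_mod_cast hm
        rw [h2]
        nlinarith
    set u : ℕ → ℝ := fun j => S.fn s j (S.Tinv^[n + 1] θ) M' with hu
    have hupos : ∀ j, 0 < u j := fun j => S.fn_pos hM' j
    have hstep : ∀ j, j ≤ n → u (j + 1) =
        Real.exp (-s) * S.g (S.Tinv^[n + 1 - j] θ) * S.h (u j) := by
      intro j hj
      show S.fn s (j + 1) (S.Tinv^[n + 1] θ) M' = _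
      rw [fn_succ, S.Titer_Tinviter (le_trans hj (Nat.le_succ n))]
      rfl
    have hE : ∀ j, j ≤ n → Real.exp (-s) * S.g (S.Tinv^[n + 1 - j] θ) * Real.exp (-(ε / 2))
        = Real.exp (P (n + 1 - j) - P (n - j)) := by
      intro j hj
      have e1 : n + 1 - j = (n - j) + 1 := by omega
      rw [e1, hPsucc (n - j)]
      have e2 : n - j + 1 = n + 1 - j := by omega
      rw [e2, add_sub_cancel_left]
      rw [show -s + Real.log (S.g (S.Tinv^[n + 1 - j] θ)) - ε / 2
          = -s + (Real.log (S.g (S.Tinv^[n + 1 - j] θ)) + -(ε / 2)) from by ring]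
      rw [Real.exp_add, Real.exp_add, Real.exp_log (S.g_pos (S.Tinv^[n + 1 - j] θ))]
      ring
    have main : ∀ j, j ≤ n + 1 → (δ ≤ u j ∨ ∃ i, i < j ∧ δ ≤ u i ∧
        δ * Real.exp (P (n + 1 - i) - P (n + 1 - j)) ≤ u j) := by
      intro j
      induction j with
      | zero =>
        intro _
        left
        show δ ≤ S.fn s 0 (S.Tinv^[n + 1] θ) M'
        exact hδM
      | succ j ih =>
        intro hj1
        have hj : j ≤ n := by omega
        have hrec := hstep j hj
        have hgpos := S.g_pos (S.Tinv^[n + 1 - j] θ)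
        have hEj : (0 : ℝ) < Real.exp (-s) * S.g (S.Tinv^[n + 1 - j] θ) := by positivity
        rcases ih (by omega) with hA | ⟨i, hij, hui, hbd⟩
        · -- case δ ≤ u j
          right
          refine ⟨j, Nat.lt_succ_self j, hA, ?_⟩
          have h1 : Real.exp (-(ε / 2)) * δ ≤ S.h δ := hδh δ hδ le_rfl
          have h2 : S.h δ ≤ S.h (u j) := S.h_mono hδ.le hA
          have h3 : Real.exp (-s) * S.g (S.Tinv^[n + 1 - j] θ) * (Real.exp (-(ε / 2)) * δ)
              ≤ u (j + 1) := by
            rw [hrec]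
            exact mul_le_mul_of_nonneg_left (h1.trans h2) hEj.le
          have e3 : n + 1 - (j + 1) = n - j := by omega
          rw [e3]
          calc δ * Real.exp (P (n + 1 - j) - P (n - j))
              = Real.exp (-s) * S.g (S.Tinv^[n + 1 - j] θ) * Real.exp (-(ε / 2)) * δ := by
                rw [← hE j hj]; ring
            _ = Real.exp (-s) * S.g (S.Tinv^[n + 1 - j] θ) * (Real.exp (-(ε / 2)) * δ) := by
                ring
            _ ≤ u (j + 1) := h3
        · by_cases hA : δ ≤ u j
          · right
            refine ⟨j, Nat.lt_succ_self j, hA, ?_⟩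
            have h1 : Real.exp (-(ε / 2)) * δ ≤ S.h δ := hδh δ hδ le_rfl
            have h2 : S.h δ ≤ S.h (u j) := S.h_mono hδ.le hA
            have h3 : Real.exp (-s) * S.g (S.Tinv^[n + 1 - j] θ) * (Real.exp (-(ε / 2)) * δ)
                ≤ u (j + 1) := by
              rw [hrec]
              exact mul_le_mul_of_nonneg_left (h1.trans h2) hEj.le
            have e3 : n + 1 - (j + 1) = n - j := by omega
            rw [e3]
            calc δ * Real.exp (P (n + 1 - j) - P (n - j))
                = Real.exp (-s) * S.g (S.Tinv^[n + 1 - j] θ) * Real.exp (-(ε / 2)) * δ := by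
                  rw [← hE j hj]; ring
              _ = Real.exp (-s) * S.g (S.Tinv^[n + 1 - j] θ) * (Real.exp (-(ε / 2)) * δ) := by
                  ring
              _ ≤ u (j + 1) := h3
          · push_neg at hA
            right
            refine ⟨i, hij.trans (Nat.lt_succ_self j), hui, ?_⟩
            have h1 : Real.exp (-(ε / 2)) * u j ≤ S.h (u j) := hδh (u j) (hupos j) hA.le
            have h3 : Real.exp (-s) * S.g (S.Tinv^[n + 1 - j] θ) * (Real.exp (-(ε / 2)) * u j)
                ≤ u (j + 1) := by
              rw [hrec]
              exact mul_le_mul_of_nonneg_left h1 hEj.le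
            have h4 : Real.exp (-s) * S.g (S.Tinv^[n + 1 - j] θ) * (Real.exp (-(ε / 2))
                * (δ * Real.exp (P (n + 1 - i) - P (n + 1 - j))))
                ≤ Real.exp (-s) * S.g (S.Tinv^[n + 1 - j] θ) * (Real.exp (-(ε / 2)) * u j) := by
              refine mul_le_mul_of_nonneg_left ?_ hEj.le
              exact mul_le_mul_of_nonneg_left hbd (Real.exp_pos _).le
            have e3 : n + 1 - (j + 1) = n - j := by omega
            rw [e3]
            calc δ * Real.exp (P (n + 1 - i) - P (n - j))
                = (Real.exp (-s) * S.g (S.Tinv^[n + 1 - j] θ) * Real.exp (-(ε / 2)))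
                  * (δ * Real.exp (P (n + 1 - i) - P (n + 1 - j))) := by
                  have hExp : Real.exp (P (n + 1 - j) - P (n - j))
                      * Real.exp (P (n + 1 - i) - P (n + 1 - j))
                      = Real.exp (P (n + 1 - i) - P (n - j)) := by
                    rw [← Real.exp_add]
                    congr 1
                    ring
                  rw [hE j hj, ← hExp]
                  ring
              _ = Real.exp (-s) * S.g (S.Tinv^[n + 1 - j] θ) * (Real.exp (-(ε / 2))
                  * (δ * Real.exp (P (n + 1 - i) - P (n + 1 - j)))) := by ring
              _ ≤ u (j + 1) := h4.trans h3
    have hfinal := main (n + 1) le_rfl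
    have hψ : S.ψ s M' (n + 1) θ = u (n + 1) := rfl
    rw [hψ]
    rcases hfinal with hA | ⟨i, hij, _, hbd⟩
    · have : Real.exp (-c) ≤ 1 := Real.exp_le_one_iff.2 (by linarith)
      nlinarith
    · have e1 : n + 1 - (n + 1) = 0 := by omega
      rw [e1, hP0] at hbd
      have h5 : Real.exp (-c) ≤ Real.exp (P (n + 1 - i) - 0) :=
        Real.exp_le_exp.2 (by have := hP (n + 1 - i); linarith)
      have h6 : δ * Real.exp (-c) ≤ δ * Real.exp (P (n + 1 - i) - 0) :=
        mul_le_mul_of_nonneg_left h5 hδ.le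
      linarith
  have hpos : (0 : ℝ) < δ * Real.exp (-c) := by positivity
  calc (0 : ℝ) < δ * Real.exp (-c) := hpos
    _ ≤ S.φ s M' θ := le_ciInf fun n => hkey n

end Star


end Setting

open Setting in
theorem stmt9' {Θ : Type*} [MeasurableSpace Θ] (S : Setting Θ)
    (M : ℝ → ℝ) (hM : ∀ t, 0 < M t) (hMf : ∀ t θ, S.f t θ (M t) < M t)
    (t : ℝ) (μ : Measure Θ) [IsProbabilityMeasure μ]
    (hμ : MeasurePreserving S.T μ μ) :
    μ (S.Sset M t \ S.Nset t (M t)) = 0 := by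
  classical
  rcases isEmpty_or_nonempty Θ with hΘ | hΘ
  · rw [Set.eq_empty_of_isEmpty (S.Sset M t \ S.Nset t (M t))]
    simp
  obtain ⟨C, hC⟩ := S.g_bdd
  set Mt := M t with hMt_def
  have hMt : 0 < Mt := hM t
  have hfMt : ∀ θ, S.f t θ Mt < Mt := hMf t
  set A : Set Θ := S.Sset M t \ S.Nset t Mt with hA_def
  -- membership characterisation
  have hAmem : ∀ θ, θ ∈ A ↔ (S.tc M θ = t ∧ 0 < S.φ t Mt θ) := by
    intro θ
    rw [hA_def, Set.mem_diff]
    constructor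
    · rintro ⟨h1, h2⟩
      refine ⟨h1, ?_⟩
      rcases eq_or_lt_of_le (S.phi_nonneg hMt θ) with h | h
      · exact absurd h.symm h2
      · exact h
    · rintro ⟨h1, h2⟩
      exact ⟨h1, fun h0 => (ne_of_gt h2) (show S.φ t Mt θ = 0 from h0)⟩
  -- invariance of A
  have hAT : ∀ θ, θ ∈ A ↔ S.T θ ∈ A := by
    intro θ
    rw [hAmem θ, hAmem (S.T θ), S.tc_T hM hMf θ]
    have h2 := S.phi_zero_iff hMt hfMt θ
    constructor
    · rintro ⟨h1, hp⟩
      refine ⟨h1, ?_⟩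
      rcases eq_or_lt_of_le (S.phi_nonneg hMt (S.T θ)) with h | h
      · exact absurd (h2.1 h.symm) (ne_of_gt hp)
      · exact h
    · rintro ⟨h1, hp⟩
      refine ⟨h1, ?_⟩
      rcases eq_or_lt_of_le (S.phi_nonneg hMt θ) with h | h
      · exact absurd (h2.2 h.symm) (ne_of_gt hp)
      · exact h
  have hATinv : ∀ θ, θ ∈ A ↔ S.Tinv θ ∈ A := by
    intro θ
    have := hAT (S.Tinv θ)
    rw [S.right_inv θ] at this
    exact this.symm
  have hAiter : ∀ (k : ℕ) θ, θ ∈ A ↔ S.Tinv^[k] θ ∈ A := by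
    intro k
    induction k with
    | zero => intro θ; rfl
    | succ k ih =>
      intro θ
      rw [Function.iterate_succ_apply']
      exact (ih θ).trans (hATinv _)
  -- measurability of A
  have hNmeas : MeasurableSet (S.Nset t Mt) :=
    measurableSet_eq_fun (S.phi_meas hMt) measurable_const
  have hSmeas : MeasurableSet (S.Sset M t) := by
    have : S.Sset M t = S.tc M ⁻¹' {t} := rfl
    rw [this]
    exact (S.tc_meas hM hC) (measurableSet_singleton t)
  have hAmeas : MeasurableSet A := hSmeas.diff hNmeas
  -- the observable W
  set V : Θ → ℝ := fun θ => Real.log (S.φ t Mt θ / S.hext (S.φ t Mt θ)) with hV_def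
  have hVmeas : Measurable V :=
    Real.measurable_log.comp ((S.phi_meas hMt).div (S.hext_cont.measurable.comp (S.phi_meas hMt)))
  set W : Θ → ℝ := A.indicator V with hW_def
  have hWmeas : Measurable W := hVmeas.indicator hAmeas
  set K : ℝ := Real.log (Mt / S.h Mt) with hK_def
  have hK0 : 0 < K := Real.log_pos (S.one_le_inv_ratio hMt)
  have hWval : ∀ θ ∈ A, W θ = Real.log (S.φ t Mt θ / S.h (S.φ t Mt θ)) := by
    intro θ hθ
    have hp : 0 < S.φ t Mt θ := ((hAmem θ).1 hθ).2
    rw [hW_def, Set.indicator_of_mem hθ]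
    simp only [hV_def]
    rw [S.hext_eq hp.le]
  have hWpos : ∀ θ ∈ A, 0 < W θ := by
    intro θ hθ
    have hp : 0 < S.φ t Mt θ := ((hAmem θ).1 hθ).2
    rw [hWval θ hθ]
    exact Real.log_pos (S.one_le_inv_ratio hp)
  have hWnn : ∀ θ, 0 ≤ W θ := by
    intro θ
    by_cases hθ : θ ∈ A
    · exact (hWpos θ hθ).le
    · rw [hW_def, Set.indicator_of_notMem hθ]
  have hWle : ∀ θ, W θ ≤ K := by
    intro θ
    by_cases hθ : θ ∈ A
    · have hp : 0 < S.φ t Mt θ := ((hAmem θ).1 hθ).2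
      rw [hWval θ hθ, hK_def]
      have h1 : S.φ t Mt θ / S.h (S.φ t Mt θ) ≤ Mt / S.h Mt :=
        S.inv_ratio_le hp (S.phi_lt_M hMt hfMt θ).le
      have h2 : 0 < S.φ t Mt θ / S.h (S.φ t Mt θ) := div_pos hp (S.h_pos hp)
      exact Real.log_le_log h2 h1
    · rw [hW_def, Set.indicator_of_notMem hθ]
      exact hK0.le
  -- one-step cocycle
  have hco1 : ∀ θ ∈ A, Real.log (S.φ t Mt θ) = Real.log (S.φ t Mt (S.Tinv θ))
      + (-t + Real.log (S.g (S.Tinv θ)) - W (S.Tinv θ)) := by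
    intro θ hθ
    have hθ' : S.Tinv θ ∈ A := (hATinv θ).1 hθ
    have hp' : 0 < S.φ t Mt (S.Tinv θ) := ((hAmem _).1 hθ').2
    have hh' : 0 < S.h (S.φ t Mt (S.Tinv θ)) := S.h_pos hp'
    have hphi : S.φ t Mt θ = S.f t (S.Tinv θ) (S.φ t Mt (S.Tinv θ)) := by
      have h3 := S.phi_T hMt hfMt (S.Tinv θ)
      rw [S.right_inv θ] at h3
      exact h3
    have hgp := S.g_pos (S.Tinv θ)
    rw [hphi]
    show Real.log (Real.exp (-t) * S.g (S.Tinv θ) * S.h (S.φ t Mt (S.Tinv θ))) = _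
    rw [Real.log_mul (by positivity) hh'.ne', Real.log_mul (Real.exp_ne_zero _) hgp.ne',
      Real.log_exp]
    have hWv : W (S.Tinv θ) = Real.log (S.φ t Mt (S.Tinv θ))
        - Real.log (S.h (S.φ t Mt (S.Tinv θ))) := by
      rw [hWval _ hθ', Real.log_div hp'.ne' hh'.ne']
    rw [hWv]
    ring
  -- telescoped cocycle
  have hco : ∀ θ ∈ A, ∀ m : ℕ, Real.log (S.φ t Mt θ)
      = Real.log (S.φ t Mt (S.Tinv^[m] θ))
        + ∑ k ∈ Finset.range m, (-t + Real.log (S.g (S.Tinv^[k + 1] θ)) - W (S.Tinv^[k + 1] θ)) := by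
    intro θ hθ m
    induction m with
    | zero => simp
    | succ m ih =>
      have hθm : S.Tinv^[m] θ ∈ A := (hAiter m θ).1 hθ
      have h1 := hco1 _ hθm
      rw [← Function.iterate_succ_apply' S.Tinv m θ] at h1
      rw [Finset.sum_range_succ, ih, h1]
      ring
  -- summed lower bound on the log g sums
  have hsum : ∀ θ ∈ A, ∀ m : ℕ,
      Real.log (S.φ t Mt θ) - Real.log Mt + t * m
          + ∑ k ∈ Finset.range m, W (S.Tinv^[k + 1] θ)
        ≤ ∑ k ∈ Finset.range m, Real.log (S.g (S.Tinv^[k + 1] θ)) := by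
    intro θ hθ m
    have h1 := hco θ hθ m
    have hθm : S.Tinv^[m] θ ∈ A := (hAiter m θ).1 hθ
    have hpm : 0 < S.φ t Mt (S.Tinv^[m] θ) := ((hAmem _).1 hθm).2
    have h2 : Real.log (S.φ t Mt (S.Tinv^[m] θ)) ≤ Real.log Mt :=
      Real.log_le_log hpm (S.phi_lt_M hMt hfMt _).le
    have h3 : ∑ k ∈ Finset.range m, (-t + Real.log (S.g (S.Tinv^[k + 1] θ)) - W (S.Tinv^[k + 1] θ))
        = -(t * m) + ∑ k ∈ Finset.range m, Real.log (S.g (S.Tinv^[k + 1] θ))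
          - ∑ k ∈ Finset.range m, W (S.Tinv^[k + 1] θ) := by
      rw [Finset.sum_sub_distrib, Finset.sum_add_distrib, Finset.sum_const, Finset.card_range,
        nsmul_eq_mul]
      push_cast
      ring
    rw [h3] at h1
    linarith
  -- the ergodic sums of W
  set cW : ℕ → Θ → ℝ := fun m θ => ∑ k ∈ Finset.range m, W (S.Tinv^[k] θ) with hcW_def
  have hcWmeas : ∀ m, Measurable (cW m) := by
    intro m
    apply Finset.measurable_sum
    intro k _
    exact hWmeas.comp (S.Tinv_meas.iterate k)
  -- A satisfies the recurrence condition
  have hAC : ∀ θ ∈ A, ∀ ε : ℝ, 0 < ε → ∀ N : ℕ, ∃ m, N ≤ m ∧ cW m θ ≤ ε * m := by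
    intro θ hθ ε hε N
    by_contra hcon
    push_neg at hcon
    have hθtc : S.tc M θ = t := ((hAmem θ).1 hθ).1
    set s := t + ε / 4 with hs_def
    have hNne : (Finset.range (N + 1)).Nonempty := ⟨0, by simp⟩
    set c1 : ℝ := (Finset.range (N + 1)).sup' hNne (fun m => ε / 4 * m
      - ∑ k ∈ Finset.range m, (-s + Real.log (S.g (S.Tinv^[k + 1] θ)))) with hc1_def
    set c : ℝ := max 0 (max (Real.log Mt + K - Real.log (S.φ t Mt θ)) c1) with hc_def
    have hc0 : 0 ≤ c := le_max_left _ _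
    have hstar : ∀ m : ℕ, 1 ≤ m → ε / 4 * m - c
        ≤ ∑ k ∈ Finset.range m, (-s + Real.log (S.g (S.Tinv^[k + 1] θ))) := by
      intro m hm
      by_cases hmN : m ≤ N
      · have h4 : c1 ≤ c := (le_max_right _ _).trans (le_max_right _ _)
        have h5 := Finset.le_sup' (f := fun m => ε / 4 * m
            - ∑ k ∈ Finset.range m, (-s + Real.log (S.g (S.Tinv^[k + 1] θ))))
          (Finset.mem_range.2 (by omega) : m ∈ Finset.range (N + 1))
        rw [← hc1_def] at h5
        linarith
      · push_neg at hmN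
        have h4 := hcon (m + 1) (by omega)
        have h5 := hsum θ hθ m
        have hsplit : ∑ k ∈ Finset.range m, W (S.Tinv^[k + 1] θ) = cW (m + 1) θ - W θ := by
          simp only [hcW_def]
          rw [Finset.sum_range_succ']
          simp only [Function.iterate_zero_apply]
          ring
        have hsum2 : ∑ k ∈ Finset.range m, (-s + Real.log (S.g (S.Tinv^[k + 1] θ)))
            = -(s * m) + ∑ k ∈ Finset.range m, Real.log (S.g (S.Tinv^[k + 1] θ)) := by
          rw [Finset.sum_add_distrib, Finset.sum_const, Finset.card_range, nsmul_eq_mul]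
          push_cast
          ring
        have hq : Real.log Mt + K - Real.log (S.φ t Mt θ) ≤ c :=
          (le_max_left _ _).trans (le_max_right _ _)
        have hWθ := hWle θ
        have hm0 : (0 : ℝ) ≤ (m : ℝ) := Nat.cast_nonneg m
        have hcast : ((m + 1 : ℕ) : ℝ) = (m : ℝ) + 1 := by push_cast; ring
        rw [hcast] at h4
        rw [hsum2, hs_def]
        rw [hsplit] at h5
        nlinarith
    -- find δ
    have hlt1 : Real.exp (-(ε / 4 / 2)) < 1 := Real.exp_lt_one_iff.2 (by linarith)
    have hev1 : ∀ᶠ x in 𝓝[>] (0 : ℝ), Real.exp (-(ε / 4 / 2)) < S.h x / x :=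
      S.slope_tendsto.eventually (eventually_gt_nhds hlt1)
    have hev2 : ∀ᶠ x in 𝓝[>] (0 : ℝ), x < M s :=
      nhdsWithin_le_nhds (Iio_mem_nhds (hM s))
    obtain ⟨δ, hδ0, hδsub⟩ := mem_nhdsGT_iff_exists_Ioc_subset.1 (hev1.and hev2)
    have hδpos : 0 < δ := hδ0
    have hδM : δ ≤ M s := (hδsub ⟨hδpos, le_rfl⟩).2.le
    have hδh : ∀ x : ℝ, 0 < x → x ≤ δ → Real.exp (-(ε / 4 / 2)) * x ≤ S.h x := by
      intro x hx1 hx2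
      have h6 := (hδsub ⟨hx1, hx2⟩).1
      rw [lt_div_iff₀ hx1] at h6
      linarith
    have hφs : 0 < S.φ s (M s) θ :=
      S.phi_pos_of_star (hM s) (hMf s) θ (by linarith : (0:ℝ) < ε / 4) hc0 hδpos hδM hδh hstar
    have h7 : s ≤ S.tc M θ := S.le_tc hM hC hφs.ne'
    rw [hθtc] at h7
    rw [hs_def] at h7
    linarith
  -- measure-preservation for Tinv and its iterates
  set e : Θ ≃ᵐ Θ :=
    { toFun := S.T
      invFun := S.Tinv
      left_inv := S.left_inv
      right_inv := S.right_inv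
      measurable_toFun := S.T_meas
      measurable_invFun := S.Tinv_meas } with he_def
  have hμe : MeasurePreserving (⇑e) μ μ := hμ
  have hμsymm : MeasurePreserving (⇑e.symm) μ μ := MeasurePreserving.symm e hμe
  have hcompint : ∀ (G : Θ → ℝ) (k : ℕ), ∫ θ, G (S.Tinv^[k] θ) ∂μ = ∫ θ, G θ ∂μ := by
    intro G k
    induction k with
    | zero => simp
    | succ k ih =>
      have h1 : (fun θ => G (S.Tinv^[k + 1] θ)) = fun θ => G (S.Tinv^[k] (S.Tinv θ)) := by
        funext θ
        rw [Function.iterate_succ_apply]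
      rw [h1]
      have h2 := hμsymm.integral_comp' (fun θ => G (S.Tinv^[k] θ))
      rw [← ih]
      exact h2
  -- bounded implies integrable
  have hbint : ∀ (G : Θ → ℝ) (D : ℝ), Measurable G → (∀ θ, |G θ| ≤ D) → Integrable G μ := by
    intro G D hGm hGb
    refine ⟨hGm.aestronglyMeasurable, ?_⟩
    apply HasFiniteIntegral.of_bounded (C := D)
    exact Filter.Eventually.of_forall fun θ => by simpa [Real.norm_eq_abs] using hGb θ
  have hWint : Integrable W μ := hbint W K hWmeas fun θ => by
    rw [abs_of_nonneg (hWnn θ)]; exact hWle θ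
  -- main estimate : ∫ W ≤ 2 ε for all ε > 0
  have hmain : ∀ ε : ℝ, 0 < ε → ∫ θ, W θ ∂μ ≤ 2 * ε := by
    intro ε hε
    -- the bad sets
    set E : ℕ → Set Θ := fun N => {θ | ¬ ∃ m, 1 ≤ m ∧ m ≤ N ∧ cW m θ ≤ ε * m} with hE_def
    have hEmeas : ∀ N, MeasurableSet (E N) := by
      intro N
      have : E N = (⋃ m : ℕ, ⋃ _h : 1 ≤ m ∧ m ≤ N, {θ | cW m θ ≤ ε * m})ᶜ := by
        ext θ
        simp only [hE_def, Set.mem_setOf_eq, Set.mem_compl_iff, Set.mem_iUnion]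
        apply not_congr
        constructor
        · rintro ⟨m, h1, h2, h3⟩
          exact ⟨m, ⟨h1, h2⟩, h3⟩
        · rintro ⟨m, ⟨h1, h2⟩, h3⟩
          exact ⟨m, h1, h2, h3⟩
      rw [this]
      exact (MeasurableSet.iUnion fun m => MeasurableSet.iUnion fun _ =>
        measurableSet_le (hcWmeas m) measurable_const).compl
    have hEanti : Antitone fun N => A ∩ E N := by
      intro N1 N2 hN
      apply Set.inter_subset_inter_right
      intro θ hθ
      simp only [hE_def, Set.mem_setOf_eq] at hθ ⊢
      rintro ⟨m, hm1, hm2, hm3⟩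
      exact hθ ⟨m, hm1, hm2.trans hN, hm3⟩
    have hEempty : (⋂ N, A ∩ E N) = ∅ := by
      ext θ
      simp only [Set.mem_iInter, Set.mem_inter_iff, Set.mem_empty_iff_false, iff_false, not_forall]
      by_contra hcon
      push_neg at hcon
      have hθA : θ ∈ A := (hcon 0).1
      obtain ⟨m, hm1, hm2⟩ := hAC θ hθA ε hε 1
      have h8 := (hcon m).2
      simp only [hE_def, Set.mem_setOf_eq] at h8
      exact h8 ⟨m, hm1, le_rfl, hm2⟩
    have hEtend : Tendsto (fun N => μ (A ∩ E N)) atTop (𝓝 0) := by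
      have h9 := tendsto_measure_iInter_atTop
        (fun N => ((hAmeas.inter (hEmeas N)).nullMeasurableSet)) hEanti
        ⟨0, measure_ne_top μ _⟩
      rw [hEempty] at h9
      simpa [Function.comp_def] using h9
    -- choose N
    have hEtoReal : Tendsto (fun N => (μ (A ∩ E N)).toReal) atTop (𝓝 0) := by
      have h10 : Tendsto (fun N => (μ (A ∩ E N)).toReal) atTop (𝓝 (0 : ENNReal).toReal) :=
        (ENNReal.tendsto_toReal (by simp)).comp hEtend
      simpa using h10
    obtain ⟨N, hN⟩ := (hEtoReal.eventually (eventually_lt_nhds (show (0:ℝ) < ε / K by positivity))).exists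
    -- the truncated function
    set ft : Θ → ℝ := fun θ => if θ ∈ E N then 0 else W θ with hft_def
    have hftmeas : Measurable ft := Measurable.ite (hEmeas N) measurable_const hWmeas
    have hftnn : ∀ θ, 0 ≤ ft θ := by
      intro θ
      rw [hft_def]
      by_cases hθ : θ ∈ E N <;> simp [hθ, hWnn θ]
    have hftle : ∀ θ, ft θ ≤ K := by
      intro θ
      rw [hft_def]
      by_cases hθ : θ ∈ E N <;> simp [hθ, hWle θ, hK0.le]
    have hftW : ∀ θ, ft θ ≤ W θ := by
      intro θ
      rw [hft_def]
      by_cases hθ : θ ∈ E N <;> simp [hθ, hWnn θ]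
    have hftA : ∀ θ, θ ∉ A → ft θ = 0 := by
      intro θ hθ
      rw [hft_def]
      by_cases hθE : θ ∈ E N
      · simp [hθE]
      · simp [hθE, hW_def, Set.indicator_of_notMem hθ]
    have hftint : Integrable ft μ := hbint ft K hftmeas fun θ => by
      rw [abs_of_nonneg (hftnn θ)]; exact hftle θ
    -- the key combinatorial estimate
    have hkey : ∀ L : ℕ, ∀ θ ∈ A,
        ∑ k ∈ Finset.range L, ft (S.Tinv^[k] θ) ≤ ε * L + N * K := by
      intro L
      induction L using Nat.strong_induction_on with
      | _ L ih =>
        intro θ hθ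
        by_cases hLN : L ≤ N
        · have h11 : ∑ k ∈ Finset.range L, ft (S.Tinv^[k] θ)
              ≤ ∑ _k ∈ Finset.range L, K :=
            Finset.sum_le_sum fun k _ => hftle _
          rw [Finset.sum_const, Finset.card_range, nsmul_eq_mul] at h11
          have h12 : (L : ℝ) * K ≤ (N : ℝ) * K :=
            mul_le_mul_of_nonneg_right (Nat.cast_le.2 hLN) hK0.le
          have h13 : (0 : ℝ) ≤ ε * L := by positivity
          linarith
        · push_neg at hLN
          by_cases hθE : θ ∈ E N
          · have hL1 : L = (L - 1) + 1 := by omega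
            rw [hL1, Finset.sum_range_succ']
            have h14 : ∀ k, ft (S.Tinv^[k + 1] θ) = ft (S.Tinv^[k] (S.Tinv θ)) := by
              intro k
              rw [Function.iterate_succ_apply]
            simp only [h14, Function.iterate_zero_apply]
            have h15 : ft θ = 0 := by rw [hft_def]; simp [hθE]
            rw [h15]
            have h16 := ih (L - 1) (by omega) (S.Tinv θ) ((hATinv θ).1 hθ)
            have h18 : ((L - 1 + 1 : ℕ) : ℝ) = ((L - 1 : ℕ) : ℝ) + 1 := by push_cast; ring
            rw [h18]
            nlinarith [hε.le]
          · have hex : ∃ m, 1 ≤ m ∧ m ≤ N ∧ cW m θ ≤ ε * m := by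
              by_contra h18
              exact hθE h18
            obtain ⟨m, hm1, hmN, hcWm⟩ := hex
            have hmL : m ≤ L := by omega
            rw [← Finset.sum_range_add_sum_Ico _ hmL]
            have h19 : ∑ k ∈ Finset.Ico m L, ft (S.Tinv^[k] θ)
                = ∑ k ∈ Finset.range (L - m), ft (S.Tinv^[k] (S.Tinv^[m] θ)) := by
              rw [Finset.sum_Ico_eq_sum_range]
              apply Finset.sum_congr rfl
              intro k _
              rw [show m + k = k + m from add_comm m k, Function.iterate_add_apply]
            have h20 : ∑ k ∈ Finset.range m, ft (S.Tinv^[k] θ) ≤ ε * m := by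
              calc ∑ k ∈ Finset.range m, ft (S.Tinv^[k] θ)
                  ≤ ∑ k ∈ Finset.range m, W (S.Tinv^[k] θ) :=
                    Finset.sum_le_sum fun k _ => hftW _
                _ = cW m θ := rfl
                _ ≤ ε * m := hcWm
            have h21 := ih (L - m) (by omega) (S.Tinv^[m] θ) ((hAiter m θ).1 hθ)
            rw [h19]
            have h22 : ((L - m : ℕ) : ℝ) = (L : ℝ) - (m : ℝ) := by
              rw [Nat.cast_sub hmL]
            rw [h22] at h21
            nlinarith
    -- integrate
    have hint_ft_comp : ∀ k : ℕ, Integrable (fun θ => ft (S.Tinv^[k] θ)) μ := by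
      intro k
      refine hbint _ K (hftmeas.comp (S.Tinv_meas.iterate k)) fun θ => ?_
      rw [abs_of_nonneg (hftnn _)]
      exact hftle _
    have hSL : ∀ L : ℕ, 1 ≤ L → ∫ θ, ft θ ∂μ ≤ ε + N * K / L := by
      intro L hL
      have hLpos : (0 : ℝ) < L := by exact_mod_cast hL
      have h23 : ∫ θ, (∑ k ∈ Finset.range L, ft (S.Tinv^[k] θ)) ∂μ
          = ∑ k ∈ Finset.range L, ∫ θ, ft (S.Tinv^[k] θ) ∂μ :=
        integral_finset_sum _ fun k _ => hint_ft_comp k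
      have h24 : ∀ k : ℕ, ∫ θ, ft (S.Tinv^[k] θ) ∂μ = ∫ θ, ft θ ∂μ := fun k => hcompint ft k
      have h25 : ∫ θ, (∑ k ∈ Finset.range L, ft (S.Tinv^[k] θ)) ∂μ = L * ∫ θ, ft θ ∂μ := by
        rw [h23]
        rw [Finset.sum_congr rfl fun k _ => h24 k]
        rw [Finset.sum_const, Finset.card_range, nsmul_eq_mul]
      have h26 : ∀ θ, (∑ k ∈ Finset.range L, ft (S.Tinv^[k] θ)) ≤ ε * L + N * K := by
        intro θ
        by_cases hθ : θ ∈ A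
        · exact hkey L θ hθ
        · have h27 : ∀ k ∈ Finset.range L, ft (S.Tinv^[k] θ) = 0 := by
            intro k _
            apply hftA
            intro hmem
            exact hθ ((hAiter k θ).2 hmem)
          rw [Finset.sum_eq_zero h27]
          positivity
      have hsumint : Integrable (fun θ => ∑ k ∈ Finset.range L, ft (S.Tinv^[k] θ)) μ :=
        integrable_finset_sum _ fun k _ => hint_ft_comp k
      have h28 : ∫ θ, (∑ k ∈ Finset.range L, ft (S.Tinv^[k] θ)) ∂μ
          ≤ ∫ _θ, (ε * L + N * K : ℝ) ∂μ :=
        integral_mono hsumint (integrable_const _) h26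
      rw [h25, integral_const] at h28
      simp only [measure_univ, ENNReal.toReal_one, probReal_univ, smul_eq_mul, one_mul] at h28
      have h29 : ∫ θ, ft θ ∂μ ≤ (ε * L + N * K) / L := by
        rw [le_div_iff₀ hLpos, mul_comm]
        linarith
      calc ∫ θ, ft θ ∂μ ≤ (ε * L + N * K) / L := h29
        _ = ε + N * K / L := by
            rw [add_div, mul_div_cancel_right₀ _ (ne_of_gt hLpos)]
    have hft_le_eps : ∫ θ, ft θ ∂μ ≤ ε := by
      have h30 : Tendsto (fun L : ℕ => ε + N * K / (L : ℝ)) atTop (𝓝 (ε + 0)) :=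
        tendsto_const_nhds.add (tendsto_const_div_atTop_nhds_zero_nat (N * K))
      rw [add_zero] at h30
      refine ge_of_tendsto h30 ?_
      filter_upwards [eventually_ge_atTop 1] with L hL
      exact hSL L hL
    have hdecomp : ∀ θ, W θ = ft θ + (A ∩ E N).indicator W θ := by
      intro θ
      by_cases hθE : θ ∈ E N
      · by_cases hθA : θ ∈ A
        · simp only [hft_def, if_pos hθE]
          rw [Set.indicator_of_mem (Set.mem_inter hθA hθE)]
          ring
        · simp only [hft_def, if_pos hθE]
          rw [Set.indicator_of_notMem (fun hc => hθA hc.1)]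
          rw [hW_def, Set.indicator_of_notMem hθA]
          ring
      · simp only [hft_def, if_neg hθE]
        rw [Set.indicator_of_notMem (fun hc => hθE hc.2)]
        ring
    have hindint : Integrable ((A ∩ E N).indicator W) μ := by
      apply hbint _ K (hWmeas.indicator (hAmeas.inter (hEmeas N)))
      intro θ
      by_cases hθ : θ ∈ A ∩ E N
      · rw [Set.indicator_of_mem hθ, abs_of_nonneg (hWnn θ)]
        exact hWle θ
      · rw [Set.indicator_of_notMem hθ]
        simp [hK0.le]
    have hsplitint : ∫ θ, W θ ∂μ = ∫ θ, ft θ ∂μ + ∫ θ, (A ∩ E N).indicator W θ ∂μ := by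
      rw [← integral_add hftint hindint]
      exact integral_congr_ae (Filter.Eventually.of_forall fun θ => hdecomp θ)
    have hindle : ∫ θ, (A ∩ E N).indicator W θ ∂μ ≤ K * (μ (A ∩ E N)).toReal := by
      have h31 : ∀ θ, (A ∩ E N).indicator W θ ≤ (A ∩ E N).indicator (fun _ => K) θ := by
        intro θ
        by_cases hθ : θ ∈ A ∩ E N
        · rw [Set.indicator_of_mem hθ, Set.indicator_of_mem hθ]
          exact hWle θ
        · rw [Set.indicator_of_notMem hθ, Set.indicator_of_notMem hθ]
      have h32 : Integrable ((A ∩ E N).indicator (fun _ => K)) μ :=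
        (integrable_const K).indicator (hAmeas.inter (hEmeas N))
      have h33 := integral_mono hindint h32 h31
      rw [integral_indicator_const K (hAmeas.inter (hEmeas N)), smul_eq_mul, measureReal_def] at h33
      linarith [h33, mul_comm ((μ (A ∩ E N)).toReal) K]
    have hKE : K * (μ (A ∩ E N)).toReal ≤ ε := by
      have h35 : K * (ε / K) = ε := by field_simp
      nlinarith [mul_lt_mul_of_pos_left hN hK0]
    calc ∫ θ, W θ ∂μ = ∫ θ, ft θ ∂μ + ∫ θ, (A ∩ E N).indicator W θ ∂μ := hsplitint
      _ ≤ ε + ε := add_le_add hft_le_eps (hindle.trans hKE)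
      _ = 2 * ε := by ring
  have hWzero : ∫ θ, W θ ∂μ = 0 := by
    have h34 : ∫ θ, W θ ∂μ ≤ 0 := by
      refine le_of_forall_pos_le_add ?_
      intro ε hε
      have h36 := hmain (ε / 2) (by linarith)
      linarith
    linarith [integral_nonneg (μ := μ) (f := W) hWnn]
  have hae : W =ᵐ[μ] 0 := (integral_eq_zero_iff_of_nonneg hWnn hWint).1 hWzero
  have hnull : μ {θ | ¬ W θ = 0} = 0 := by
    have h37 := hae
    rw [Filter.EventuallyEq, ae_iff] at h37
    simpa using h37
  have hsub : A ⊆ {θ | ¬ W θ = 0} := fun θ hθ => ne_of_gt (hWpos θ hθ)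
  exact measure_mono_null hsub hnull


/-- assuming `h` twice differentiable at `0` with `h''(0) < 0`, for every
`t ∈ ℝ` and every `T`-invariant probability measure `μ`, `μ(S_t \ N_t) = 0`. -/
theorem stmt9 {Θ : Type*} [MeasurableSpace Θ] (S : Setting Θ)
    (hsecond : ∃ c : ℝ, c < 0 ∧ HasDerivWithinAt S.h' c (Set.Ici 0) 0)
    (M : ℝ → ℝ) (hM : ∀ t, 0 < M t) (hMf : ∀ t θ, S.f t θ (M t) < M t)
    (t : ℝ) (μ : Measure Θ) [IsProbabilityMeasure μ]
    (hμ : MeasurePreserving S.T μ μ) :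
    μ (S.Sset M t \ S.Nset t (M t)) = 0 :=
  stmt9' S M hM hMf t μ hμ
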